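/- The optimal offline cost OPT(σ) of serving a request sequence σ is at least the sum over all unordered pairs {x,y} of items of the optimal cost of serving the projected sequence σ_{xy} on the two-item list consisting of x and y in their initial relative order. -/

import Mathlib

abbrev Before {I : Type} [DecidableEq I] (x y : I) (L : List I) : Prop :=
  L.idxOf x < L.idxOf y

/-- Projection of a request sequence to the requests to `x` and `y`. -/
def proj2 {I : Type} [DecidableEq I] (x y : I) (σ : List I) : List I :=
  σ.filter (fun z => decide (z = x ∨ z = y))

/-- Kendall tau distance between the list states `L` and `M`. -/
def numInv {I : Type} [DecidableEq I] (L M : List I) : ℕ :=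
  ((L.product L).filter
    (fun p => decide (L.idxOf p.1 < L.idxOf p.2 ∧ M.idxOf p.2 < M.idxOf p.1))).length

/-- Total cost in the partial cost model: paid exchanges plus access position. -/
def totalCostAux {I : Type} [DecidableEq I] (S : List I → List I) :
    List I → List I → ℕ
  | _, [] => 0
  | pref, z :: rest =>
      numInv (S pref) (S (pref ++ [z])) + (S (pref ++ [z])).idxOf z
        + totalCostAux S (pref ++ [z]) rest

def totalCost {I : Type} [DecidableEq I] (S : List I → List I) (σ : List I) : ℕ :=
  totalCostAux S [] σ

/-- Optimal offline cost of serving `σ` starting from list state `L0`. -/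
noncomputable def optCost {I : Type} [DecidableEq I] (L0 σ : List I) : ℕ :=
  sInf { c | ∃ S : List I → List I, S [] = L0 ∧ (∀ τ, (S τ).Perm L0) ∧ totalCost S σ = c }

set_option linter.unusedSectionVars false
set_option linter.unusedVariables false

section Aux
variable {I : Type} [DecidableEq I]

lemma numInv_self (L : List I) : numInv L L = 0 := by
  simp [numInv]; intro a b h; omega

lemma numInv_flip (a b : I) (hab : a ≠ b) : numInv [a,b] [b,a] = 1 := by
  simp [numInv, List.product, List.idxOf_cons, cond_eq_if, beq_iff_eq, hab, hab.symm]

lemma proj2_comm (x y : I) (A : List I) : proj2 x y A = proj2 y x A := by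
  unfold proj2; apply List.filter_congr; intro a _; simp [or_comm]

lemma proj2_cons (x y a : I) (A : List I) :
    proj2 x y (a :: A) = if a = x ∨ a = y then a :: proj2 x y A else proj2 x y A := by
  simp only [proj2, List.filter_cons, decide_eq_true_eq]

lemma filter_none {x y : I} {A : List I} (hx : x ∉ A) (hy : y ∉ A) :
    proj2 x y A = [] := by
  apply List.filter_eq_nil_iff.2
  intro b hb
  have h1 : b ≠ x := fun h => hx (h ▸ hb)
  have h2 : b ≠ y := fun h => hy (h ▸ hb)
  simp [h1, h2]

lemma filter_single {x y : I} {A : List I} (hA : A.Nodup) (hy : y ∈ A) (hx : x ∉ A) :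
    proj2 x y A = [y] := by
  induction A with
  | nil => simp at hy
  | cons a A ih =>
    have ha := (List.nodup_cons.1 hA).1
    have hA' := (List.nodup_cons.1 hA).2
    have hx1 : a ≠ x := fun h => hx (by simp [h])
    have hx2 : x ∉ A := fun h => hx (by simp [h])
    rw [proj2_cons]
    by_cases hay : a = y
    · subst hay
      rw [if_pos (Or.inr rfl), filter_none hx2 ha]
    · have hy' : y ∈ A := by
        rcases List.mem_cons.1 hy with h | h
        · exact absurd h.symm hay
        · exact h
      rw [if_neg (by tauto), ih hA' hy' hx2]

lemma filter_self {x : I} {A : List I} (hA : A.Nodup) (hx : x ∈ A) :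
    proj2 x x A = [x] := by
  induction A with
  | nil => simp at hx
  | cons a A ih =>
    have ha := (List.nodup_cons.1 hA).1
    have hA' := (List.nodup_cons.1 hA).2
    rw [proj2_cons]
    by_cases hax : a = x
    · subst hax
      rw [if_pos (Or.inl rfl), filter_none ha ha]
    · have hx' : x ∈ A := by
        rcases List.mem_cons.1 hx with h | h
        · exact absurd h.symm hax
        · exact h
      rw [if_neg (by tauto), ih hA' hx']

lemma proj2_eq_pair {x y : I} {A : List I} (hA : A.Nodup) (hx : x ∈ A) (hy : y ∈ A)
    (hxy : x ≠ y) (hord : A.idxOf x < A.idxOf y) : proj2 x y A = [x, y] := by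
  induction A with
  | nil => simp at hx
  | cons a A ih =>
    have ha := (List.nodup_cons.1 hA).1
    have hA' := (List.nodup_cons.1 hA).2
    rw [proj2_cons]
    by_cases hax : a = x
    · subst hax
      have hyA : y ∈ A := by
        rcases List.mem_cons.1 hy with h | h
        · exact absurd h.symm hxy
        · exact h
      rw [if_pos (Or.inl rfl), filter_single hA' hyA ha]
    · by_cases hay : a = y
      · subst hay
        have h0 : List.idxOf a (a :: A) = 0 := by simp
        omega
      · have hx' : x ∈ A := by
          rcases List.mem_cons.1 hx with h | h
          · exact absurd h.symm hax
          · exact h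
        have hy' : y ∈ A := by
          rcases List.mem_cons.1 hy with h | h
          · exact absurd h.symm hay
          · exact h
        have hord' : A.idxOf x < A.idxOf y := by
          rw [List.idxOf_cons_ne _ hax, List.idxOf_cons_ne _ hay] at hord
          omega
        rw [if_neg (by tauto), ih hA' hx' hy' hord']

lemma perm_pair {a b : I} (hab : a ≠ b) {N : List I} (h : N.Perm [a,b]) :
    N = [a,b] ∨ N = [b,a] := by
  have hlen : N.length = 2 := h.length_eq
  match N, hlen with
  | [c,d], _ =>
    have hc : c ∈ [a,b] := h.mem_iff.1 (by simp)
    have hd : d ∈ [a,b] := h.mem_iff.1 (by simp)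
    have hnd : ([c,d] : List I).Nodup := h.nodup_iff.2 (by simp [hab])
    simp at hc hd hnd
    rcases hc with rfl | rfl <;> rcases hd with rfl | rfl <;> simp_all

lemma length_filter_lt_indexOf {B : List I} (hB : B.Nodup) {z : I} (hz : z ∈ B) :
    (B.filter (fun w => decide (B.idxOf w < B.idxOf z))).length = B.idxOf z := by
  induction B with
  | nil => simp at hz
  | cons b B ih =>
    have hb := (List.nodup_cons.1 hB).1
    have hB' := (List.nodup_cons.1 hB).2
    by_cases hbz : b = z
    · subst hbz
      rw [List.idxOf_cons_self]
      apply List.length_eq_zero_iff.2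
      apply List.filter_eq_nil_iff.2
      intro w _
      simp
    · have hz' : z ∈ B := by
        rcases List.mem_cons.1 hz with h | h
        · exact absurd h.symm hbz
        · exact h
      have hiz : List.idxOf z (b :: B) = List.idxOf z B + 1 :=
        List.idxOf_cons_ne _ hbz
      rw [List.filter_cons, if_pos (by simp [hiz])]
      rw [List.length_cons]
      have hcongr : List.filter (fun w => decide (List.idxOf w (b::B) < List.idxOf z (b::B))) B
          = List.filter (fun w => decide (List.idxOf w B < List.idxOf z B)) B := by
        apply List.filter_congr
        intro w hw
        have hwb : w ≠ b := fun h => hb (h ▸ hw)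
        rw [List.idxOf_cons_ne _ hwb.symm, hiz]
        simp only [decide_eq_decide]
        omega
      rw [hcongr, ih hB' hz']
      omega

end Aux

section Counting
variable {I : Type} [DecidableEq I] [Fintype I]

lemma numInv_eq_sum {A B : List I} (hA : A.Nodup) (huniv : ∀ w : I, w ∈ A) :
    numInv A B = ∑ x : I, ∑ y : I,
      (if A.idxOf x < A.idxOf y ∧ B.idxOf y < B.idxOf x then 1 else 0) := by
  have hprodnodup : (A.product A).Nodup := List.Nodup.product hA hA
  set p : I × I → Bool := fun p => decide (A.idxOf p.1 < A.idxOf p.2 ∧ B.idxOf p.2 < B.idxOf p.1) with hp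
  have hfil : ((A.product A).filter p).Nodup := hprodnodup.filter _
  rw [numInv, ← List.toFinset_card_of_nodup hfil, List.toFinset_filter]
  have huniv' : (A.product A).toFinset = (Finset.univ : Finset (I × I)) := by
    apply Finset.ext
    rintro ⟨a, b⟩
    simp [List.pair_mem_product, huniv]
  rw [huniv', Finset.card_filter]
  rw [Fintype.sum_prod_type]
  apply Finset.sum_congr rfl
  intro a _
  apply Finset.sum_congr rfl
  intro b _
  simp [hp]

lemma indexOf_eq_sum {B : List I} (hB : B.Nodup) (huniv : ∀ w : I, w ∈ B) (z : I) :
    B.idxOf z = ∑ w : I, if B.idxOf w < B.idxOf z then 1 else 0 := by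
  set p : I → Bool := fun w => decide (B.idxOf w < B.idxOf z) with hp
  have h1 : (B.filter p).Nodup := hB.filter _
  have h2 : B.toFinset = (Finset.univ : Finset I) := by
    apply Finset.ext; intro a; simp [huniv]
  have hsum : (∑ w : I, if B.idxOf w < B.idxOf z then 1 else 0) = (B.filter p).length := by
    rw [← List.toFinset_card_of_nodup h1, List.toFinset_filter, h2, Finset.card_filter]
    apply Finset.sum_congr rfl
    intro w _
    simp [hp]
  rw [hsum, length_filter_lt_indexOf hB (huniv z)]

lemma sum_pairs_symm [LinearOrder I] (f : I → I → ℕ)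
    (hsymm : ∀ x y, f x y = f y x) (hdiag : ∀ x, f x x = 0) :
    2 * (∑ x : I, ∑ y : I, if x < y then f x y else 0) = ∑ x : I, ∑ y : I, f x y := by
  have key : ∀ x y : I, f x y =
      (if x < y then f x y else 0) + (if y < x then f x y else 0) := by
    intro x y
    rcases lt_trichotomy x y with h | h | h
    · simp [h, not_lt_of_gt h, lt_asymm h]
    · subst h; simp [hdiag]
    · simp [h, lt_asymm h, not_lt_of_gt h]
  have hswap : (∑ x : I, ∑ y : I, if y < x then f x y else 0)
      = ∑ x : I, ∑ y : I, if x < y then f x y else 0 := by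
    rw [Finset.sum_comm]
    apply Finset.sum_congr rfl
    intro x _
    apply Finset.sum_congr rfl
    intro y _
    rw [hsymm]
  calc 2 * (∑ x : I, ∑ y : I, if x < y then f x y else 0)
      = (∑ x : I, ∑ y : I, if x < y then f x y else 0)
        + (∑ x : I, ∑ y : I, if y < x then f x y else 0) := by rw [hswap]; ring
    _ = ∑ x : I, ∑ y : I, ((if x < y then f x y else 0) + (if y < x then f x y else 0)) := by
        rw [← Finset.sum_add_distrib]
        apply Finset.sum_congr rfl
        intro x _
        rw [← Finset.sum_add_distrib]
    _ = ∑ x : I, ∑ y : I, f x y := by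
        apply Finset.sum_congr rfl; intro x _
        apply Finset.sum_congr rfl; intro y _
        exact (key x y).symm

end Counting

section Pointwise
variable {I : Type} [DecidableEq I]

lemma indexOf_ne {A : List I} (hA : A.Nodup) {x y : I} (hx : x ∈ A) (hy : y ∈ A)
    (hxy : x ≠ y) : A.idxOf x ≠ A.idxOf y := by
  intro h
  exact hxy ((List.idxOf_inj hx).1 h)

lemma numInv_proj2_eq {x y : I} {A B : List I} (hA : A.Nodup) (hB : B.Nodup)
    (hAu : ∀ w : I, w ∈ A) (hBu : ∀ w : I, w ∈ B) :
    numInv (proj2 x y A) (proj2 x y B)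
      = (if A.idxOf x < A.idxOf y ∧ B.idxOf y < B.idxOf x then 1 else 0)
      + (if A.idxOf y < A.idxOf x ∧ B.idxOf x < B.idxOf y then 1 else 0) := by
  by_cases hxy : x = y
  · subst hxy
    rw [filter_self hA (hAu x), filter_self hB (hBu x), numInv_self]
    simp
  · have hAxy := indexOf_ne hA (hAu x) (hAu y) hxy
    have hBxy := indexOf_ne hB (hBu x) (hBu y) hxy
    rcases lt_or_gt_of_ne hAxy with hA1 | hA1 <;> rcases lt_or_gt_of_ne hBxy with hB1 | hB1
    · rw [proj2_eq_pair hA (hAu x) (hAu y) hxy hA1, proj2_eq_pair hB (hBu x) (hBu y) hxy hB1,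
        numInv_self]
      rw [if_neg (by omega), if_neg (by omega)]
    · rw [proj2_eq_pair hA (hAu x) (hAu y) hxy hA1,
        proj2_comm x y B, proj2_eq_pair hB (hBu y) (hBu x) (Ne.symm hxy) hB1,
        numInv_flip x y hxy]
      rw [if_pos ⟨hA1, hB1⟩, if_neg (by omega)]
    · rw [proj2_comm x y A, proj2_eq_pair hA (hAu y) (hAu x) (Ne.symm hxy) hA1,
        proj2_eq_pair hB (hBu x) (hBu y) hxy hB1,
        numInv_flip y x (Ne.symm hxy)]
      rw [if_neg (by omega), if_pos ⟨hA1, hB1⟩]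
    · rw [proj2_comm x y A, proj2_eq_pair hA (hAu y) (hAu x) (Ne.symm hxy) hA1,
        proj2_comm x y B, proj2_eq_pair hB (hBu y) (hBu x) (Ne.symm hxy) hB1,
        numInv_self]
      rw [if_neg (by omega), if_neg (by omega)]

lemma access_proj2_eq (x y z : I) {B : List I} (hB : B.Nodup) (hBu : ∀ w : I, w ∈ B) :
    (if z = x ∨ z = y then (proj2 x y B).idxOf z else 0)
      = (if z = x then (if B.idxOf y < B.idxOf z then 1 else 0) else 0)
      + (if z = y then (if B.idxOf x < B.idxOf z then 1 else 0) else 0) := by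
  by_cases hxy : x = y
  · subst hxy
    by_cases hzx : z = x
    · subst hzx
      rw [filter_self hB (hBu z)]
      simp
    · simp [hzx]
  · by_cases hzx : z = x
    · subst hzx
      have hzy : ¬ z = y := hxy
      have hne := indexOf_ne hB (hBu z) (hBu y) hxy
      rw [if_pos (Or.inl rfl), if_pos rfl, if_neg hzy]
      rcases lt_or_gt_of_ne hne with h | h
      · rw [proj2_eq_pair hB (hBu z) (hBu y) hxy h]
        simp only [List.idxOf_cons_self]
        rw [if_neg (by omega)]
      · rw [proj2_comm, proj2_eq_pair hB (hBu y) (hBu z) (Ne.symm hxy) h]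
        rw [List.idxOf_cons_ne _ (by exact fun hh => hxy hh.symm), List.idxOf_cons_self,
          if_pos (by omega)]
    · by_cases hzy : z = y
      · subst hzy
        have hne := indexOf_ne hB (hBu z) (hBu x) (fun h => hxy h.symm)
        rw [if_pos (Or.inr rfl), if_neg hzx, if_pos rfl]
        rcases lt_or_gt_of_ne hne with h | h
        · rw [proj2_comm, proj2_eq_pair hB (hBu z) (hBu x) (fun h => hxy h.symm) h]
          simp only [List.idxOf_cons_self]
          rw [if_neg (by omega)]
        · rw [proj2_eq_pair hB (hBu x) (hBu z) hxy h,
            List.idxOf_cons_ne _ (fun hh => hzx hh.symm), List.idxOf_cons_self,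
            if_pos (by omega)]
      · rw [if_neg (by tauto), if_neg hzx, if_neg hzy]

end Pointwise

section StepIdentity
variable {I : Type} [DecidableEq I] [Fintype I] [LinearOrder I]

lemma step_eq_sum_pairs {A B : List I} (hA : A.Nodup) (hB : B.Nodup)
    (hAu : ∀ w : I, w ∈ A) (hBu : ∀ w : I, w ∈ B) (z : I) :
    numInv A B + B.idxOf z
      = ∑ x : I, ∑ y : I, if x < y then
          (numInv (proj2 x y A) (proj2 x y B)
            + if z = x ∨ z = y then (proj2 x y B).idxOf z else 0) else 0 := by
  set f : I → I → ℕ := fun x y =>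
    numInv (proj2 x y A) (proj2 x y B)
      + if z = x ∨ z = y then (proj2 x y B).idxOf z else 0 with hf
  have hsymm : ∀ x y, f x y = f y x := by
    intro x y
    simp only [hf, proj2_comm x y A, proj2_comm x y B, or_comm]
  have hdiag : ∀ x, f x x = 0 := by
    intro x
    simp only [hf]
    rw [filter_self hA (hAu x), filter_self hB (hBu x), numInv_self]
    by_cases hzx : z = x
    · subst hzx; simp
    · simp [hzx]
  have h2 : 2 * (∑ x : I, ∑ y : I, if x < y then f x y else 0) = ∑ x : I, ∑ y : I, f x y :=
    sum_pairs_symm f hsymm hdiag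
  have hsplit : (∑ x : I, ∑ y : I, f x y) = 2 * (numInv A B + B.idxOf z) := by
    have hpoint : ∀ x y : I, f x y =
        ((if A.idxOf x < A.idxOf y ∧ B.idxOf y < B.idxOf x then 1 else 0)
          + (if A.idxOf y < A.idxOf x ∧ B.idxOf x < B.idxOf y then 1 else 0))
        + ((if z = x then (if B.idxOf y < B.idxOf z then 1 else 0) else 0)
          + (if z = y then (if B.idxOf x < B.idxOf z then 1 else 0) else 0)) := by
      intro x y
      rw [hf]
      simp only
      rw [numInv_proj2_eq hA hB hAu hBu, access_proj2_eq x y z hB hBu]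
    calc (∑ x : I, ∑ y : I, f x y)
        = (∑ x : I, ∑ y : I, ((if A.idxOf x < A.idxOf y ∧ B.idxOf y < B.idxOf x then 1 else 0)
            + (if A.idxOf y < A.idxOf x ∧ B.idxOf x < B.idxOf y then 1 else 0)))
          + (∑ x : I, ∑ y : I, ((if z = x then (if B.idxOf y < B.idxOf z then 1 else 0) else 0)
            + (if z = y then (if B.idxOf x < B.idxOf z then 1 else 0) else 0))) := by
          rw [← Finset.sum_add_distrib]
          apply Finset.sum_congr rfl
          intro x _
          rw [← Finset.sum_add_distrib]
          apply Finset.sum_congr rfl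
          intro y _
          exact hpoint x y
      _ = 2 * numInv A B + 2 * B.idxOf z := by
          congr 1
          · -- inversions
            have e0 : (∑ x : I, ∑ y : I, (if A.idxOf x < A.idxOf y ∧ B.idxOf y < B.idxOf x then 1 else 0))
                = numInv A B := (numInv_eq_sum hA hAu).symm
            have e1 : (∑ x : I, ∑ y : I, (if A.idxOf y < A.idxOf x ∧ B.idxOf x < B.idxOf y then 1 else 0))
                = numInv A B := by
              rw [Finset.sum_comm, ← numInv_eq_sum hA hAu]
            calc (∑ x : I, ∑ y : I,
                  ((if A.idxOf x < A.idxOf y ∧ B.idxOf y < B.idxOf x then 1 else 0)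
                    + (if A.idxOf y < A.idxOf x ∧ B.idxOf x < B.idxOf y then 1 else 0)))
                = (∑ x : I, ((∑ y : I, (if A.idxOf x < A.idxOf y ∧ B.idxOf y < B.idxOf x then 1 else 0))
                    + (∑ y : I, (if A.idxOf y < A.idxOf x ∧ B.idxOf x < B.idxOf y then 1 else 0)))) := by
                  apply Finset.sum_congr rfl
                  intro x _
                  exact Finset.sum_add_distrib
              _ = (∑ x : I, ∑ y : I, (if A.idxOf x < A.idxOf y ∧ B.idxOf y < B.idxOf x then 1 else 0))
                  + (∑ x : I, ∑ y : I, (if A.idxOf y < A.idxOf x ∧ B.idxOf x < B.idxOf y then 1 else 0)) :=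
                  Finset.sum_add_distrib
              _ = 2 * numInv A B := by rw [e0, e1]; ring
          · -- accesses
            have c0 : ∀ y : I, (∑ x : I, (if z = x then (if B.idxOf y < B.idxOf z then 1 else 0) else 0))
                = (if B.idxOf y < B.idxOf z then 1 else 0) := by
              intro y
              rw [Finset.sum_ite_eq]
              simp
            calc (∑ x : I, ∑ y : I,
                  ((if z = x then (if B.idxOf y < B.idxOf z then 1 else 0) else 0)
                    + (if z = y then (if B.idxOf x < B.idxOf z then 1 else 0) else 0)))
                = (∑ x : I, ((∑ y : I, (if z = x then (if B.idxOf y < B.idxOf z then 1 else 0) else 0))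
                    + (∑ y : I, (if z = y then (if B.idxOf x < B.idxOf z then 1 else 0) else 0)))) := by
                  apply Finset.sum_congr rfl
                  intro x _
                  exact Finset.sum_add_distrib
              _ = (∑ x : I, ∑ y : I, (if z = x then (if B.idxOf y < B.idxOf z then 1 else 0) else 0))
                  + (∑ x : I, ∑ y : I, (if z = y then (if B.idxOf x < B.idxOf z then 1 else 0) else 0)) :=
                  Finset.sum_add_distrib
              _ = 2 * B.idxOf z := by
                  have p1 : (∑ x : I, ∑ y : I, (if z = x then (if B.idxOf y < B.idxOf z then 1 else 0) else 0))
                      = B.idxOf z := by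
                    rw [Finset.sum_comm]
                    rw [Finset.sum_congr rfl (fun y _ => c0 y)]
                    exact (indexOf_eq_sum hB hBu z).symm
                  have p2 : (∑ x : I, ∑ y : I, (if z = y then (if B.idxOf x < B.idxOf z then 1 else 0) else 0))
                      = B.idxOf z := by
                    rw [Finset.sum_congr rfl (fun x _ => c0 x)]
                    exact (indexOf_eq_sum hB hBu z).symm
                  rw [p1, p2]; ring
      _ = 2 * (numInv A B + B.idxOf z) := by ring
  have hfin : (∑ x : I, ∑ y : I, if x < y then f x y else 0) = numInv A B + B.idxOf z := by omega
  exact hfin.symm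

end StepIdentity


section CostLemmas
variable {I : Type} [DecidableEq I]

lemma optSet_nonempty (L0 σ : List I) :
    { c | ∃ S : List I → List I, S [] = L0 ∧ (∀ τ, (S τ).Perm L0) ∧ totalCost S σ = c }.Nonempty :=
  ⟨totalCost (fun _ => L0) σ, fun _ => L0, rfl, fun _ => List.Perm.refl L0, rfl⟩

lemma optCost_nil (L : List I) : optCost L [] = 0 := by
  have h : (0 : ℕ) ∈ { c | ∃ S : List I → List I, S [] = L ∧ (∀ τ, (S τ).Perm L) ∧ totalCost S [] = c } :=
    ⟨fun _ => L, rfl, fun _ => List.Perm.refl L, rfl⟩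
  exact Nat.le_zero.1 (Nat.sInf_le h)

lemma totalCostAux_congr {S S' : List I → List I}
    (h : ∀ ρ, ρ ≠ [] → S ρ = S' ρ) :
    ∀ σ pref, pref ≠ [] → totalCostAux S pref σ = totalCostAux S' pref σ := by
  intro σ
  induction σ with
  | nil => intro pref _; rfl
  | cons z rest ih =>
    intro pref hp
    have hne : pref ++ [z] ≠ [] := by simp
    simp only [totalCostAux, h pref hp, h _ hne, ih _ hne]

lemma totalCostAux_shift {S S' : List I → List I} {z : I}
    (h : ∀ ρ, S (z :: ρ) = S' ρ) :
    ∀ σ pref, totalCostAux S (z :: pref) σ = totalCostAux S' pref σ := by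
  intro σ
  induction σ with
  | nil => intro pref; rfl
  | cons w rest ih =>
    intro pref
    have e : z :: pref ++ [w] = z :: (pref ++ [w]) := by simp
    simp only [totalCostAux, e, h, ih]

lemma opt_step {L M : List I} (hML : M.Perm L) (z : I) (τ : List I) :
    optCost L (z :: τ) ≤ numInv L M + M.idxOf z + optCost M τ := by
  obtain ⟨S, hS0, hSp, hStot⟩ := Nat.sInf_mem (optSet_nonempty M τ)
  set S' : List I → List I := fun ρ => match ρ with
    | [] => L
    | _ :: ρ' => S ρ' with hS'
  have hmem : totalCost S' (z :: τ) ∈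
      { c | ∃ T : List I → List I, T [] = L ∧ (∀ ρ, (T ρ).Perm L) ∧ totalCost T (z :: τ) = c } := by
    refine ⟨S', rfl, ?_, rfl⟩
    intro ρ
    match ρ with
    | [] => exact List.Perm.refl L
    | a :: ρ' => exact (hSp ρ').trans hML
  have hval : totalCost S' (z :: τ) = numInv L M + M.idxOf z + totalCost S τ := by
    show totalCostAux S' [] (z :: τ) = _
    have h1 : totalCostAux S' ([] ++ [z]) τ = totalCostAux S [] τ :=
      totalCostAux_shift (fun ρ => rfl) τ []
    simp only [totalCostAux, List.nil_append] at h1 ⊢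
    rw [h1]
    have e0 : S' [] = L := rfl
    have e1 : S' [z] = M := by show S [] = M; exact hS0
    rw [e0, e1]
    rfl
  calc optCost L (z :: τ) ≤ totalCost S' (z :: τ) := Nat.sInf_le hmem
    _ = numInv L M + M.idxOf z + totalCost S τ := hval
    _ = numInv L M + M.idxOf z + optCost M τ := by rw [hStot]; rfl

lemma opt_change {L M : List I} (hML : M.Perm L)
    (htri : ∀ N, N.Perm M → numInv L N ≤ numInv L M + numInv M N) (τ : List I) :
    optCost L τ ≤ numInv L M + optCost M τ := by
  cases τ with
  | nil => rw [optCost_nil, optCost_nil]; omega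
  | cons w rest =>
    obtain ⟨S, hS0, hSp, hStot⟩ := Nat.sInf_mem (optSet_nonempty M (w :: rest))
    set S' : List I → List I := fun ρ => if ρ = [] then L else S ρ with hS'
    have hagree : ∀ ρ, ρ ≠ [] → S' ρ = S ρ := by
      intro ρ h; simp [hS', h]
    have hmem : totalCost S' (w :: rest) ∈
        { c | ∃ T : List I → List I, T [] = L ∧ (∀ ρ, (T ρ).Perm L) ∧ totalCost T (w :: rest) = c } := by
      refine ⟨S', by simp [hS'], ?_, rfl⟩
      intro ρ
      by_cases h : ρ = []
      · simp [hS', h]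
      · rw [hagree ρ h]; exact (hSp ρ).trans hML
    have htail : totalCostAux S' ([] ++ [w]) rest = totalCostAux S ([] ++ [w]) rest :=
      totalCostAux_congr hagree rest _ (by simp)
    have hval : totalCost S' (w :: rest) ≤ numInv L M + totalCost S (w :: rest) := by
      show totalCostAux S' [] (w :: rest) ≤ numInv L M + totalCostAux S [] (w :: rest)
      simp only [totalCostAux]
      rw [htail]
      have e0 : S' [] = L := by simp [hS']
      have e1 : S' ([] ++ [w]) = S ([] ++ [w]) := hagree _ (by simp)
      rw [e0, e1, hS0]
      have := htri (S ([] ++ [w])) (hSp ([] ++ [w]))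
      clear hStot hmem hagree hS' hSp hML hS0 htail
      omega
    calc optCost L (w :: rest) ≤ totalCost S' (w :: rest) := Nat.sInf_le hmem
      _ ≤ numInv L M + totalCost S (w :: rest) := hval
      _ = numInv L M + optCost M (w :: rest) := by rw [hStot]; rfl

def pairCostAux (x y : I) (S : List I → List I) : List I → List I → ℕ
  | _, [] => 0
  | pref, z :: rest =>
      numInv (proj2 x y (S pref)) (proj2 x y (S (pref ++ [z])))
        + (if z = x ∨ z = y then (proj2 x y (S (pref ++ [z]))).idxOf z else 0)
        + pairCostAux x y S (pref ++ [z]) rest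

lemma pair_opt_le {x y : I} (hxy : x ≠ y) {L0 : List I} (hL0 : L0.Nodup)
    (hx : x ∈ L0) (hy : y ∈ L0) {S : List I → List I} (hSp : ∀ τ, (S τ).Perm L0) :
    ∀ (σ pref : List I), optCost (proj2 x y (S pref)) (proj2 x y σ) ≤ pairCostAux x y S pref σ := by
  have hP0 : (proj2 x y L0).Perm [x, y] := by
    rcases lt_or_gt_of_ne (indexOf_ne hL0 hx hy hxy) with h | h
    · rw [proj2_eq_pair hL0 hx hy hxy h]
    · rw [proj2_comm, proj2_eq_pair hL0 hy hx (Ne.symm hxy) h]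
      exact List.Perm.swap x y []
  have hPerm : ∀ τ, (proj2 x y (S τ)).Perm [x, y] :=
    fun τ => (List.Perm.filter _ (hSp τ)).trans hP0
  have htri : ∀ L M N : List I, L.Perm [x,y] → M.Perm [x,y] → N.Perm [x,y] →
      numInv L N ≤ numInv L M + numInv M N := by
    intro L M N hL hM hN
    rcases perm_pair hxy hL with rfl | rfl <;> rcases perm_pair hxy hM with rfl | rfl <;>
      rcases perm_pair hxy hN with rfl | rfl <;>
      simp [numInv_self, numInv_flip x y hxy, numInv_flip y x (Ne.symm hxy)]
  intro σ
  induction σ with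
  | nil =>
    intro pref
    rw [show proj2 x y ([] : List I) = [] from rfl, optCost_nil]
    exact Nat.zero_le _
  | cons z rest ih =>
    intro pref
    rw [proj2_cons]
    have hML : (proj2 x y (S (pref ++ [z]))).Perm (proj2 x y (S pref)) :=
      (hPerm _).trans (hPerm pref).symm
    by_cases hz : z = x ∨ z = y
    · rw [if_pos hz]
      have hstep := opt_step hML z (proj2 x y rest)
      have hih := ih (pref ++ [z])
      have hunfold : pairCostAux x y S pref (z :: rest)
          = numInv (proj2 x y (S pref)) (proj2 x y (S (pref ++ [z])))
            + (proj2 x y (S (pref ++ [z]))).idxOf z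
            + pairCostAux x y S (pref ++ [z]) rest := by
        simp only [pairCostAux, if_pos hz]
      rw [hunfold]
      omega
    · rw [if_neg hz]
      have hchange := opt_change hML
        (fun N hN => htri _ _ _ (hPerm pref) (hPerm (pref ++ [z])) (hN.trans (hPerm _))) (proj2 x y rest)
      have hih := ih (pref ++ [z])
      have hunfold : pairCostAux x y S pref (z :: rest)
          = numInv (proj2 x y (S pref)) (proj2 x y (S (pref ++ [z])))
            + 0
            + pairCostAux x y S (pref ++ [z]) rest := by
        simp only [pairCostAux, if_neg hz]
      rw [hunfold]
      omega

end CostLemmas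

section Decomp
variable {I : Type} [DecidableEq I] [Fintype I] [LinearOrder I]

lemma totalCostAux_eq_sum {S : List I → List I}
    (hSn : ∀ τ, (S τ).Nodup) (hSu : ∀ τ (w : I), w ∈ S τ) :
    ∀ (σ pref : List I), totalCostAux S pref σ
      = ∑ x : I, ∑ y : I, if x < y then pairCostAux x y S pref σ else 0 := by
  intro σ
  induction σ with
  | nil =>
    intro pref
    simp [totalCostAux, pairCostAux]
  | cons z rest ih =>
    intro pref
    have hstep := step_eq_sum_pairs (hSn pref) (hSn (pref ++ [z])) (hSu pref) (hSu (pref ++ [z])) z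
    calc totalCostAux S pref (z :: rest)
        = (numInv (S pref) (S (pref ++ [z])) + (S (pref ++ [z])).idxOf z)
          + totalCostAux S (pref ++ [z]) rest := by simp only [totalCostAux]
      _ = (∑ x : I, ∑ y : I, if x < y then
            (numInv (proj2 x y (S pref)) (proj2 x y (S (pref ++ [z])))
              + if z = x ∨ z = y then (proj2 x y (S (pref ++ [z]))).idxOf z else 0) else 0)
          + (∑ x : I, ∑ y : I, if x < y then pairCostAux x y S (pref ++ [z]) rest else 0) := by
            rw [hstep, ih]
      _ = ∑ x : I, ∑ y : I, if x < y then pairCostAux x y S pref (z :: rest) else 0 := by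
            rw [← Finset.sum_add_distrib]
            apply Finset.sum_congr rfl
            intro x _
            rw [← Finset.sum_add_distrib]
            apply Finset.sum_congr rfl
            intro y _
            by_cases h : x < y
            · rw [if_pos h, if_pos h, if_pos h]
              simp only [pairCostAux]
            · rw [if_neg h, if_neg h, if_neg h]

end Decomp

/-- `OPT(σ)` is at least the sum over all unordered pairs `{x,y}` of
the optimal cost of serving the projected sequence `σ_{xy}` on the two-item list of
`x` and `y` in their initial relative order. -/
theorem optCost_ge_sum_pair_optCost
    {I : Type} [DecidableEq I] [Fintype I] [LinearOrder I]
    (L0 : List I) (hnodup : L0.Nodup) (huniv : ∀ x : I, x ∈ L0) (σ : List I) :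
    (∑ x : I, ∑ y : I, if x < y then optCost (proj2 x y L0) (proj2 x y σ) else 0)
      ≤ optCost L0 σ := by
  obtain ⟨S, hS0, hSp, hStot⟩ := Nat.sInf_mem (optSet_nonempty L0 σ)
  have hgoal : optCost L0 σ = totalCost S σ := hStot.symm
  rw [hgoal]
  have hSn : ∀ τ, (S τ).Nodup := fun τ => ((hSp τ).nodup_iff).2 hnodup
  have hSu : ∀ τ (w : I), w ∈ S τ := fun τ w => ((hSp τ).mem_iff).2 (huniv w)
  rw [show totalCost S σ = totalCostAux S [] σ from rfl, totalCostAux_eq_sum hSn hSu σ []]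
  apply Finset.sum_le_sum
  intro x _
  apply Finset.sum_le_sum
  intro y _
  by_cases h : x < y
  · rw [if_pos h, if_pos h]
    have := pair_opt_le (ne_of_lt h) hnodup (huniv x) (huniv y) hSp σ []
    rwa [hS0] at this
  · rw [if_neg h, if_neg h]
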